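/- Let λ > 0 be a real number and let d be the quotient metric on ℝ/ℤ of total length 1. If λ ≥ 1/2, then the empty set generates ℝ/ℤ at tolerance λ (i.e. every x ∈ ℝ/ℤ satisfies d(x, 0) ≤ λ), so the minimal cardinality of a generating set is 0. If 0 < λ < 1/2, then the minimal cardinality of a finite subset of ℝ/ℤ generating at tolerance λ equals ⌈(−log λ − log 2)/log 3⌉. -/

import Mathlib

/-- A finite set `F ⊂ ℝ/ℤ` *generates at tolerance* `λ` if distinct elements of
`F` are at distance `> λ` and every `x ∈ ℝ/ℤ` is at distance `≤ λ` from some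
sum `∑_{j∈F} α(j)·j` with `α(j) ∈ {-1,0,1}`. -/
def GeneratesAtTolerance (lam : ℝ) (F : Finset (AddCircle (1 : ℝ))) : Prop :=
  (∀ x ∈ F, ∀ y ∈ F, x ≠ y → lam < dist x y) ∧
  ∀ x : AddCircle (1 : ℝ), ∃ α : AddCircle (1 : ℝ) → ℤ,
    (∀ j ∈ F, α j = -1 ∨ α j = 0 ∨ α j = 1) ∧
    dist x (∑ j ∈ F, α j • j) ≤ lam

open Finset

noncomputable def Stmt8.mk1 : ℝ →+ AddCircle (1:ℝ) := QuotientAddGroup.mk' _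

namespace Stmt8

lemma mk1_apply (x : ℝ) : mk1 x = (x : AddCircle (1:ℝ)) := rfl

lemma coe_int_zero (t : ℤ) : ((t : ℝ) : AddCircle (1:ℝ)) = 0 := by
  rw [AddCircle.coe_eq_zero_iff]; exact ⟨t, by simp⟩

lemma coe_add_int (x : ℝ) (t : ℤ) : ((x + t : ℝ) : AddCircle (1:ℝ)) = (x : AddCircle (1:ℝ)) := by
  rw [← mk1_apply, ← mk1_apply, map_add, mk1_apply, mk1_apply, coe_int_zero, add_zero]

lemma norm1_eq (x : ℝ) : ‖((x : ℝ) : AddCircle (1:ℝ))‖ = |x - round x| := by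
  rw [AddCircle.norm_eq]; norm_num

lemma norm1_le_abs (x : ℝ) : ‖((x : ℝ) : AddCircle (1:ℝ))‖ ≤ |x| := by
  rw [norm1_eq]; simpa using round_le x 0

lemma norm1_ge {a x : ℝ} (ha : 0 ≤ a) (h1 : a ≤ x) (h2 : x ≤ 1 - a) :
    a ≤ ‖((x : ℝ) : AddCircle (1:ℝ))‖ := by
  rw [norm1_eq]
  rcases le_or_gt (round x) 0 with h | h
  · have : ((round x : ℝ)) ≤ 0 := by exact_mod_cast h
    rw [abs_sub_comm, abs_of_nonpos (by linarith)]; linarith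
  · have : (1:ℝ) ≤ (round x : ℝ) := by exact_mod_cast h
    rw [abs_of_nonpos (by linarith)]; linarith

lemma dist1_coe (x y : ℝ) : dist ((x:ℝ) : AddCircle (1:ℝ)) ((y:ℝ) : AddCircle (1:ℝ))
    = ‖((x - y : ℝ) : AddCircle (1:ℝ))‖ := by
  rw [dist_eq_norm, ← mk1_apply, ← mk1_apply, ← map_sub, mk1_apply]

lemma coe_zsmul' (c : ℤ) (x : ℝ) :
    (c : ℤ) • ((x:ℝ) : AddCircle (1:ℝ)) = (((c:ℝ) * x : ℝ) : AddCircle (1:ℝ)) := by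
  rw [← mk1_apply, ← map_zsmul, zsmul_eq_mul, mk1_apply]

/-- Balanced ternary representations exist modulo `3^n`. -/
lemma bt (n : ℕ) : ∀ m : ℤ, ∃ c : ℕ → ℤ,
    (∀ i, c i = -1 ∨ c i = 0 ∨ c i = 1) ∧
    (3:ℤ)^n ∣ (∑ i ∈ Finset.range n, c i * 3^i) - m := by
  induction n with
  | zero => exact fun m => ⟨0, fun i => Or.inr (Or.inl rfl), by simp⟩
  | succ n ih =>
    intro m
    obtain ⟨c0, hc0, hdvd⟩ : ∃ c0 : ℤ, (c0 = -1 ∨ c0 = 0 ∨ c0 = 1) ∧ (3:ℤ) ∣ m - c0 := by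
      have h3 : m % 3 = 0 ∨ m % 3 = 1 ∨ m % 3 = 2 := by omega
      rcases h3 with h|h|h
      · exact ⟨0, Or.inr (Or.inl rfl), by omega⟩
      · exact ⟨1, Or.inr (Or.inr rfl), by omega⟩
      · exact ⟨-1, Or.inl rfl, by omega⟩
    obtain ⟨q, hq⟩ := hdvd
    obtain ⟨c, hc, t, ht⟩ := ih q
    refine ⟨fun i => if i = 0 then c0 else c (i-1),
      fun i => by dsimp; split <;> [exact hc0; exact hc _], ?_⟩
    rw [Finset.sum_range_succ']
    beta_reduce
    have h1 : ∀ j ∈ Finset.range n,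
        (if j + 1 = 0 then c0 else c (j+1-1)) * 3^(j+1) = 3 * (c j * 3 ^ j) := fun j _ => by
      rw [if_neg (Nat.succ_ne_zero _)]; simp only [Nat.add_sub_cancel]; ring
    rw [Finset.sum_congr rfl h1, if_pos rfl, ← Finset.mul_sum]
    exact ⟨t, by linear_combination 3*ht - hq⟩

end Stmt8

namespace Stmt8

/-- Construction of a generating set of cardinality `k+1`. -/
lemma exists_gen (lam : ℝ) (hlam : 0 < lam) (k : ℕ)
    (h1 : 1 ≤ 2 * lam * 3^(k+1)) (h2 : 2 * lam * 3^k < 1) :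
    ∃ F : Finset (AddCircle (1:ℝ)), GeneratesAtTolerance lam F ∧ F.card = k + 1 := by
  classical
  set n := k + 1 with hn
  have h3n : (0:ℝ) < 3^n := by positivity
  set r : ℕ → ℝ := fun i => 3^i / 3^n with hr
  set pt : ℕ → AddCircle (1:ℝ) := fun i => (r i : AddCircle (1:ℝ)) with hpt
  have pow_inj : ∀ {i j : ℕ}, (3:ℝ)^i = 3^j → i = j := by
    intro i j h
    rcases lt_trichotomy i j with hl | he | hl
    · exact absurd h (ne_of_lt (pow_lt_pow_right₀ (by norm_num) hl))
    · exact he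
    · exact absurd h.symm (ne_of_lt (pow_lt_pow_right₀ (by norm_num) hl))
  have hrmem : ∀ i < n, r i ∈ Set.Ico (0:ℝ) (0 + 1) := by
    intro i hi
    constructor
    · positivity
    · rw [zero_add, hr]
      have : (3:ℝ)^i < 3^n := pow_lt_pow_right₀ (by norm_num) hi
      rw [div_lt_one h3n]; exact this
  have inj : ∀ i < n, ∀ j < n, pt i = pt j → i = j := by
    intro i hi j hj h
    rw [hpt] at h
    have := (AddCircle.coe_eq_coe_iff_of_mem_Ico (hrmem i hi) (hrmem j hj)).mp h
    rw [hr] at this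
    field_simp at this; exact pow_inj this
  set F : Finset (AddCircle (1:ℝ)) := (Finset.range n).image pt with hF
  have injOn : Set.InjOn pt (Finset.range n) := fun i hi j hj h =>
    inj i (Finset.mem_range.mp hi) j (Finset.mem_range.mp hj) h
  have hcard : F.card = n := by
    rw [hF, Finset.card_image_of_injOn injOn, Finset.card_range]
  refine ⟨F, ⟨?_, ?_⟩, hcard⟩
  · -- separation
    have key : ∀ i j : ℕ, i < j → j < n → lam < dist (pt i) (pt j) := by
      intro i j hij hj
      have h3i : (1:ℝ) ≤ 3^i := one_le_pow₀ (by norm_num)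
      have h3ij : (3:ℝ) * 3^i ≤ 3^j := by
        calc (3:ℝ) * 3^i = 3^(i+1) := (pow_succ' 3 i).symm
        _ ≤ 3^j := pow_le_pow_right₀ (by norm_num) hij
      have h3jk : (3:ℝ)^j ≤ 3^k := pow_le_pow_right₀ (by norm_num) (by omega)
      have h3k : (3:ℝ)^n = 3 * 3^k := by rw [hn, pow_succ']
      rw [hpt]; dsimp only
      rw [dist1_coe]
      have hsub : r i - r j = -((3^j - 3^i)/3^n) := by rw [hr]; ring
      have hneg : ((-((3^j - 3^i)/3^n) : ℝ) : AddCircle (1:ℝ))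
          = -((((3:ℝ)^j - 3^i)/3^n : ℝ) : AddCircle (1:ℝ)) := map_neg mk1 _
      rw [hsub, hneg, norm_neg]
      have hge : 2/3^n ≤ ‖(((3^j - 3^i)/3^n : ℝ) : AddCircle (1:ℝ))‖ := by
        have h3k1 : (1:ℝ) ≤ 3^k := one_le_pow₀ (by norm_num)
        apply norm1_ge (by positivity)
        · rw [le_div_iff₀ h3n, div_mul_cancel₀ _ (ne_of_gt h3n)]
          linarith
        · rw [div_le_iff₀ h3n, sub_mul, div_mul_cancel₀ _ (ne_of_gt h3n), one_mul]
          linarith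
      have hlt : lam < 2/3^n := by
        rw [lt_div_iff₀ h3n]; nlinarith
      linarith
    intro x hx y hy hxy
    rw [hF] at hx hy
    obtain ⟨i, hi, rfl⟩ := Finset.mem_image.mp hx
    obtain ⟨j, hj, rfl⟩ := Finset.mem_image.mp hy
    rw [Finset.mem_range] at hi hj
    rcases lt_trichotomy i j with h | h | h
    · exact key i j h hj
    · exact absurd (congrArg pt h) hxy
    · rw [dist_comm]; exact key j i h hi
  · -- covering
    intro x
    induction x using QuotientAddGroup.induction_on with
    | H x' =>
    set m : ℤ := round ((3:ℝ)^n * x') with hm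
    obtain ⟨c, hc, t, ht⟩ := bt n m
    set α : AddCircle (1:ℝ) → ℤ :=
      fun p => if h : ∃ i, i < n ∧ pt i = p then c h.choose else 0 with hα
    have αpt : ∀ i < n, α (pt i) = c i := by
      intro i hi
      have hex : ∃ j, j < n ∧ pt j = pt i := ⟨i, hi, rfl⟩
      rw [hα]; dsimp only
      rw [dif_pos hex]
      congr 1
      exact inj _ hex.choose_spec.1 _ hi hex.choose_spec.2
    refine ⟨α, ?_, ?_⟩
    · intro j hj
      rw [hα]; dsimp only
      split
      · exact hc _
      · exact Or.inr (Or.inl rfl)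
    · have hsum : (∑ j ∈ F, α j • j) = (((m:ℝ)/3^n : ℝ) : AddCircle (1:ℝ)) := by
        rw [hF, Finset.sum_image injOn]
        have step1 : ∀ i ∈ Finset.range n, α (pt i) • pt i
            = (((c i : ℝ) * r i : ℝ) : AddCircle (1:ℝ)) := by
          intro i hi
          rw [αpt i (Finset.mem_range.mp hi), hpt]; dsimp only
          exact coe_zsmul' _ _
        rw [Finset.sum_congr rfl step1]
        have step2 : (∑ i ∈ Finset.range n, (((c i : ℝ) * r i : ℝ) : AddCircle (1:ℝ)))
            = ((∑ i ∈ Finset.range n, (c i : ℝ) * r i : ℝ) : AddCircle (1:ℝ)) := by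
          simp_rw [← mk1_apply]; rw [map_sum]
        rw [step2]
        have step3 : (∑ i ∈ Finset.range n, (c i : ℝ) * r i)
            = ((∑ i ∈ Finset.range n, c i * 3^i : ℤ) : ℝ) / 3^n := by
          push_cast
          rw [Finset.sum_div]
          exact Finset.sum_congr rfl fun i _ => by simp only [hr]; ring
        rw [step3]
        have step4 : ((∑ i ∈ Finset.range n, c i * 3^i : ℤ) : ℝ) / 3^n
            = (m:ℝ)/3^n + (t:ℝ) := by
          have : ((∑ i ∈ Finset.range n, c i * 3^i : ℤ) : ℝ) = (m:ℝ) + 3^n * (t:ℝ) := by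
            have h' : (∑ i ∈ Finset.range n, c i * 3^i : ℤ) = m + 3^n * t := by linarith [ht]
            rw [h']; push_cast; ring
          rw [this]; field_simp
        rw [step4, coe_add_int]
      rw [hsum, dist1_coe]
      have habs : |x' - (m:ℝ)/3^n| ≤ (1/2)/3^n := by
        have h1' : x' - (m:ℝ)/3^n = ((3:ℝ)^n * x' - m)/3^n := by field_simp
        rw [h1', abs_div, abs_of_pos h3n, div_le_div_iff_of_pos_right h3n]
        exact abs_sub_round _
      calc ‖((x' - (m:ℝ)/3^n : ℝ) : AddCircle (1:ℝ))‖ ≤ |x' - (m:ℝ)/3^n| := norm1_le_abs _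
        _ ≤ (1/2)/3^n := habs
        _ ≤ lam := by rw [div_le_iff₀ h3n]; nlinarith

/-- Volume lower bound for any generating set. -/
lemma lower_bd (lam : ℝ) (hlam : 0 < lam) (hlt : lam < 1/2)
    (F : Finset (AddCircle (1:ℝ))) (hF : GeneratesAtTolerance lam F) :
    1 ≤ 2 * lam * 3 ^ F.card := by
  classical
  set A : Finset ℤ := {-1, 0, 1} with hA
  set S : Finset (AddCircle (1:ℝ)) :=
    Finset.image (fun g : {x // x ∈ F} → {a // a ∈ A} =>
      ∑ j ∈ F.attach, ((g j : ℤ) • (j : AddCircle (1:ℝ)))) Finset.univ with hS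
  have hScard : S.card ≤ 3 ^ F.card := by
    refine le_trans Finset.card_image_le ?_
    rw [Finset.card_univ, Fintype.card_fun, Fintype.card_coe, Fintype.card_coe]
    have : A.card = 3 := by decide
    rw [this]
  have hcover : ∀ x : AddCircle (1:ℝ), ∃ s ∈ S, dist x s ≤ lam := by
    intro x
    obtain ⟨α, hmem, hd⟩ := hF.2 x
    refine ⟨∑ j ∈ F.attach, (((fun j : {x // x ∈ F} => (⟨α j.1, by
      have := hmem j.1 j.2; simp only [hA, Finset.mem_insert, Finset.mem_singleton]; tauto⟩ :
        {a // a ∈ A})) j : ℤ) • (j.1 : AddCircle (1:ℝ))),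
      Finset.mem_image.mpr ⟨_, Finset.mem_univ _, rfl⟩, ?_⟩
    show dist x (∑ j ∈ F.attach, α j.1 • (j.1 : AddCircle (1:ℝ))) ≤ lam
    rw [Finset.sum_attach F (fun j => α j • j)]
    exact hd
  have hU : (Set.univ : Set (AddCircle (1:ℝ))) ⊆ ⋃ s ∈ S, Metric.closedBall s lam := by
    intro x _
    obtain ⟨s, hs, hd⟩ := hcover x
    exact Set.mem_biUnion hs (Metric.mem_closedBall.mpr hd)
  have h1 : (MeasureTheory.volume (Set.univ : Set (AddCircle (1:ℝ))))
      ≤ ∑ s ∈ S, MeasureTheory.volume (Metric.closedBall s lam) :=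
    le_trans (MeasureTheory.measure_mono hU) (MeasureTheory.measure_biUnion_finset_le S _)
  rw [AddCircle.measure_univ] at h1
  have hmin : min (1:ℝ) (2 * lam) = 2 * lam := min_eq_right (by linarith)
  simp_rw [AddCircle.volume_closedBall, hmin, Finset.sum_const, nsmul_eq_mul] at h1
  have h2 : (S.card : ENNReal) * ENNReal.ofReal (2 * lam)
      ≤ ((3 ^ F.card : ℕ) : ENNReal) * ENNReal.ofReal (2 * lam) :=
    mul_le_mul_left (by exact_mod_cast hScard) _
  have h3 : ENNReal.ofReal 1 ≤ ENNReal.ofReal ((3 ^ F.card : ℕ) * (2 * lam)) := by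
    have e : ENNReal.ofReal (((3 ^ F.card : ℕ):ℝ) * (2 * lam))
        = ((3 ^ F.card : ℕ) : ENNReal) * ENNReal.ofReal (2*lam) := by
      rw [ENNReal.ofReal_mul (by positivity), ENNReal.ofReal_natCast]
    exact le_trans (le_trans h1 h2) (le_of_eq e.symm)
  have h4 : (1:ℝ) ≤ (3 ^ F.card : ℕ) * (2 * lam) :=
    (ENNReal.ofReal_le_ofReal_iff (by positivity)).mp h3
  push_cast at h4
  nlinarith [h4]

end Stmt8

/-- if `λ ≥ 1/2` the empty set generates `ℝ/ℤ` at tolerance `λ`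
(every point is within `λ` of `0`), so the minimal cardinality of a generating
set is `0`; if `0 < λ < 1/2` the minimal cardinality of a generating set equals
`⌈(−log λ − log 2)/log 3⌉`. -/
theorem stmt8 (lam : ℝ) (hlam : 0 < lam) :
    (1 / 2 ≤ lam →
      GeneratesAtTolerance lam ∅ ∧ ∀ x : AddCircle (1 : ℝ), dist x 0 ≤ lam) ∧
    (lam < 1 / 2 →
      (∃ F : Finset (AddCircle (1 : ℝ)), GeneratesAtTolerance lam F ∧
        (F.card : ℤ) = ⌈(-Real.log lam - Real.log 2) / Real.log 3⌉) ∧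
      ∀ F : Finset (AddCircle (1 : ℝ)), GeneratesAtTolerance lam F →
        ⌈(-Real.log lam - Real.log 2) / Real.log 3⌉ ≤ (F.card : ℤ)) := by
  constructor
  · intro h
    have hd0 : ∀ x : AddCircle (1:ℝ), dist x 0 ≤ lam := by
      intro x
      rw [dist_zero_right]
      have h2 := AddCircle.norm_le_half_period (p := (1:ℝ)) (x := x) one_ne_zero
      have : |(1:ℝ)| / 2 = 1/2 := by norm_num
      rw [this] at h2
      linarith
    refine ⟨⟨by simp, fun x => ⟨0, by simp, ?_⟩⟩, hd0⟩
    simpa using hd0 x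
  · intro h
    set cc : ℝ := (-Real.log lam - Real.log 2) / Real.log 3 with hcc
    have hlog3 : 0 < Real.log 3 := Real.log_pos (by norm_num)
    have hkey : -Real.log lam - Real.log 2 = Real.log (1/(2*lam)) := by
      rw [Real.log_div one_ne_zero (by positivity), Real.log_mul two_ne_zero (ne_of_gt hlam),
        Real.log_one]
      ring
    have hiff : ∀ k : ℕ, cc ≤ (k:ℝ) ↔ 1 ≤ 2 * lam * 3 ^ k := by
      intro k
      have h2lam : (0:ℝ) < 2 * lam := by linarith
      have h3k : (0:ℝ) < 3 ^ k := by positivity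
      rw [hcc, div_le_iff₀ hlog3, hkey]
      have e1 : (k:ℝ) * Real.log 3 = Real.log ((3:ℝ)^k) := by rw [Real.log_pow]
      rw [e1, Real.log_le_log_iff (by positivity) h3k, div_le_iff₀ h2lam]
      constructor <;> intro h' <;> nlinarith
    have hccpos : 0 < cc := by
      rw [hcc]
      apply div_pos _ hlog3
      rw [hkey]
      apply Real.log_pos
      rw [lt_div_iff₀ (by linarith : (0:ℝ) < 2*lam)]
      linarith
    set N : ℤ := ⌈cc⌉ with hNdef
    have hN1 : 1 ≤ N := Int.ceil_pos.mpr hccpos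
    set n : ℕ := N.toNat with hn
    have hnN : (n:ℤ) = N := Int.toNat_of_nonneg (by omega)
    have hn1 : 1 ≤ n := by omega
    have hccn : cc ≤ (n:ℝ) := by
      have h5 := Int.le_ceil cc
      have h6 : ((N:ℤ):ℝ) = (n:ℝ) := by exact_mod_cast hnN.symm
      rw [← hNdef] at h5
      linarith [h5, h6.le]
    have hupper : 1 ≤ 2 * lam * 3 ^ n := (hiff n).mp hccn
    have hlower2 : 2 * lam * 3 ^ (n-1) < 1 := by
      by_contra hcon
      push_neg at hcon
      have h7 := (hiff (n-1)).mpr hcon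
      have h8 : N ≤ ((n-1:ℕ):ℤ) := Int.ceil_le.mpr (by exact_mod_cast h7)
      omega
    obtain ⟨k', hk'⟩ : ∃ k', n = k' + 1 := ⟨n-1, by omega⟩
    constructor
    · obtain ⟨F, hgen, hcard⟩ := Stmt8.exists_gen lam hlam k'
        (by rw [← hk']; exact hupper)
        (by have hnk : n - 1 = k' := by omega
            rw [← hnk]; exact hlower2)
      refine ⟨F, hgen, ?_⟩
      rw [hcard, ← hk']
      exact hnN
    · intro F hgen
      have h9 := Stmt8.lower_bd lam hlam h F hgen
      have h10 : cc ≤ (F.card : ℝ) := (hiff F.card).mpr h9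
      exact Int.ceil_le.mpr (by exact_mod_cast h10)
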